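/- A balanced basic sequent is inhabited: it admits a cut-free, identity-free unit-only MLL proof (equivalently, a correct linking). -/

import Mathlib

namespace MLL

/-- Formulas of unit-only MLL, with every connective and unit occurrence
carrying a name (a natural number). -/
inductive Formula : Type
  | one : ℕ → Formula
  | bot : ℕ → Formula
  | parr : ℕ → Formula → Formula → Formula
  | tens : ℕ → Formula → Formula → Formula
deriving DecidableEq

namespace Formula

/-- The name of the root connective/unit of a formula. -/
def name : Formula → ℕ
  | one n => n
  | bot n => n
  | parr n _ _ => n
  | tens n _ _ => n

/-- All names occurring in a formula. -/
def names : Formula → Finset ℕ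
  | one n => {n}
  | bot n => {n}
  | parr n A B => insert n (A.names ∪ B.names)
  | tens n A B => insert n (A.names ∪ B.names)

/-- All subformula occurrences of a formula. -/
def subs : Formula → List Formula
  | one n => [one n]
  | bot n => [bot n]
  | parr n A B => parr n A B :: (A.subs ++ B.subs)
  | tens n A B => tens n A B :: (A.subs ++ B.subs)

end Formula

/-- A sequent is a multiset of (named) formulas. -/
abbrev Sequent := Multiset Formula

/-- The names occurring in a sequent. -/
def seqNames (Γ : Sequent) : Finset ℕ := (Γ.map Formula.names).sup

/-- The subformula occurrences of a sequent. -/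
def seqSubs (Γ : Sequent) : Multiset Formula :=
  Γ.bind (fun A => (A.subs : Multiset Formula))

/-- `A` is a subformula occurrence of `Γ`. -/
def HasSub (Γ : Sequent) (A : Formula) : Prop := A ∈ seqSubs Γ

/-- `a` is the name of a `⊥`-occurrence of `Γ`. -/
def IsBotName (Γ : Sequent) (a : ℕ) : Prop := HasSub Γ (.bot a)

/-- `a` is the name of a `1`-occurrence of `Γ`. -/
def IsOneName (Γ : Sequent) (a : ℕ) : Prop := HasSub Γ (.one a)

/-- The sequent is well-named: all occurrences carry pairwise distinct names. -/
def WellNamed (Γ : Sequent) : Prop := ((seqSubs Γ).map Formula.name).Nodup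

/-- A linking: a function assigning to (the name of) each `⊥`-occurrence
a target name (the jump). -/
abbrev Linking := ℕ → ℕ

/-- A switching: a choice of left/right for each par occurrence. -/
abbrev Switching := ℕ → Bool

/-- The linking sends (names of) `⊥`-occurrences to names of `Γ`. -/
def ValidLinking (Γ : Sequent) (lk : Linking) : Prop :=
  ∀ a, IsBotName Γ a → lk a ∈ seqNames Γ

/-- The edges of the switching graph for `Γ`, `lk` and the switching `σ`. -/
def switchAdj (Γ : Sequent) (lk : Linking) (σ : Switching) (x y : ℕ) : Prop :=
  (∃ A B, HasSub Γ (.tens x A B) ∧ (y = A.name ∨ y = B.name)) ∨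
  (∃ A B, HasSub Γ (.parr x A B) ∧ y = (if σ x then A.name else B.name)) ∨
  (IsBotName Γ x ∧ y = lk x)

/-- The switching graph for `Γ`, `lk` and `σ`. -/
def switchGraph (Γ : Sequent) (lk : Linking) (σ : Switching) : SimpleGraph ℕ :=
  SimpleGraph.fromRel (switchAdj Γ lk σ)

/-- Correctness of a linking: every switching graph (restricted to the names of `Γ`)
is acyclic and connected, i.e. a tree.  `(Γ, lk)` is a proof net iff `Correct Γ lk`. -/
def Correct (Γ : Sequent) (lk : Linking) : Prop :=
  ValidLinking Γ lk ∧
  ∀ σ : Switching, ((switchGraph Γ lk σ).induce {x : ℕ | x ∈ seqNames Γ}).IsTree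

/-- All jumps of the linking target `1`-occurrences. -/
def TargetsOnes (Γ : Sequent) (lk : Linking) : Prop :=
  ∀ a, IsBotName Γ a → IsOneName Γ (lk a)

/-- Two correct linkings describe the same proof net (they agree on all jumps). -/
def SameNet (Γ : Sequent) (lk lk' : Linking) : Prop :=
  Correct Γ lk ∧ Correct Γ lk' ∧ ∀ a, IsBotName Γ a → lk a = lk' a

/-- A rewiring step between proof nets: the target of exactly one jump is changed. -/
def Rewire (Γ : Sequent) (lk lk' : Linking) : Prop :=
  Correct Γ lk ∧ Correct Γ lk' ∧
  ∃ a, IsBotName Γ a ∧ lk a ≠ lk' a ∧ ∀ b, IsBotName Γ b → b ≠ a → lk b = lk' b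

/-- Equivalence of proof nets over `Γ`: the equivalence relation generated by rewiring. -/
def NetEquiv (Γ : Sequent) : Linking → Linking → Prop :=
  Relation.EqvGen (fun lk lk' => SameNet Γ lk lk' ∨ Rewire Γ lk lk')

end MLL

namespace MLL

/-- Cut-free, identity-free sequent proofs of unit-only MLL. -/
inductive Proof : Sequent → Type
  | one (n : ℕ) : Proof {Formula.one n}
  | bot (n : ℕ) {Γ : Sequent} : Proof Γ → Proof (Formula.bot n ::ₘ Γ)
  | parr (n : ℕ) {Γ : Sequent} {A B : Formula} :
      Proof (A ::ₘ B ::ₘ Γ) → Proof (Formula.parr n A B ::ₘ Γ)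
  | tens (n : ℕ) {Γ Δ : Sequent} {A B : Formula} :
      Proof (A ::ₘ Γ) → Proof (B ::ₘ Δ) → Proof (Formula.tens n A B ::ₘ (Γ + Δ))

/-- The translation relation `Π ⇒ λ` from proofs to linkings: for each
`⊥`-occurrence named `a`, `λ a` is a name in the context of the `(⊥)`-inference
introducing `a`. -/
inductive Translates : {Γ : Sequent} → Proof Γ → Linking → Prop
  | one {n : ℕ} {lk : Linking} : Translates (Proof.one n) lk
  | bot {Γ : Sequent} {n : ℕ} {π : Proof Γ} {lk : Linking} :
      lk n ∈ seqNames Γ → Translates π lk → Translates (Proof.bot n π) lk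
  | parr {Γ : Sequent} {A B : Formula} {n : ℕ} {π : Proof (A ::ₘ B ::ₘ Γ)} {lk : Linking} :
      Translates π lk → Translates (Proof.parr n π) lk
  | tens {Γ Δ : Sequent} {A B : Formula} {n : ℕ} {π₁ : Proof (A ::ₘ Γ)}
      {π₂ : Proof (B ::ₘ Δ)} {lk : Linking} :
      Translates π₁ lk → Translates π₂ lk → Translates (Proof.tens n π₁ π₂) lk

end MLL

namespace MLL

/-- The number of `⊥`-occurrences of a formula. -/
def Formula.botCount : Formula → ℕ
  | .one _ => 0
  | .bot _ => 1
  | .parr _ A B => A.botCount + B.botCount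
  | .tens _ A B => A.botCount + B.botCount

/-- The number of `⅋`-occurrences of a formula. -/
def Formula.parrCount : Formula → ℕ
  | .one _ => 0
  | .bot _ => 0
  | .parr _ A B => A.parrCount + B.parrCount + 1
  | .tens _ A B => A.parrCount + B.parrCount

/-- The balance of a sequent: the number of `⊥`s minus the number of `⅋`s
minus the number of commas (a sequent of `k` formulas has `k - 1` commas). -/
def balance (Γ : Sequent) : ℤ :=
  ((Γ.map Formula.botCount).sum : ℤ) - ((Γ.map Formula.parrCount).sum : ℤ)
    - ((Multiset.card Γ : ℤ) - 1)

end MLL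

namespace MLL

/-- A basic formula: built only from `1`, `⊥` and `⊗`. -/
def IsBasicFormula : Formula → Prop
  | .one _ => True
  | .bot _ => True
  | .parr _ _ _ => False
  | .tens _ A B => IsBasicFormula A ∧ IsBasicFormula B

/-- A basic sequent: all its formulas are built only from `1`, `⊥` and `⊗`. -/
def IsBasic (Γ : Sequent) : Prop := ∀ A ∈ Γ, IsBasicFormula A

/-- A tensor-formula `⊗(⊥^n)` with `n ≥ 2`: a (binary) tensor tree of `⊥`s. -/
def IsTensOfBots : Formula → Prop
  | .tens _ A B =>
      ((∃ n, A = .bot n) ∨ IsTensOfBots A) ∧ ((∃ n, B = .bot n) ∨ IsTensOfBots B)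
  | _ => False

/-- A basic sequent in normal form: it consists of formulas `1` and
tensor-formulas `⊗(⊥^n)`, `n ≥ 2`. -/
def IsBasicNF (Γ : Sequent) : Prop :=
  ∀ A ∈ Γ, (∃ n, A = Formula.one n) ∨ IsTensOfBots A

end MLL

namespace MLL

open Formula

/-! ### Basic lemmas about subformulas and names -/

lemma Formula.self_mem_subs (F : Formula) : F ∈ F.subs := by
  cases F <;> simp [Formula.subs]

lemma Formula.subs_trans {F S T : Formula} (hS : S ∈ F.subs) (hT : T ∈ S.subs) :
    T ∈ F.subs := by
  induction F with
  | one n => simp [Formula.subs] at hS; subst hS; exact hT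
  | bot n => simp [Formula.subs] at hS; subst hS; exact hT
  | parr n A B ihA ihB =>
    simp only [Formula.subs, List.mem_cons, List.mem_append] at hS ⊢
    rcases hS with rfl | hS | hS
    · simp only [Formula.subs, List.mem_cons, List.mem_append] at hT
      exact hT
    · exact Or.inr (Or.inl (ihA hS))
    · exact Or.inr (Or.inr (ihB hS))
  | tens n A B ihA ihB =>
    simp only [Formula.subs, List.mem_cons, List.mem_append] at hS ⊢
    rcases hS with rfl | hS | hS
    · simp only [Formula.subs, List.mem_cons, List.mem_append] at hT
      exact hT
    · exact Or.inr (Or.inl (ihA hS))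
    · exact Or.inr (Or.inr (ihB hS))

lemma Formula.mem_names_iff {F : Formula} {a : ℕ} :
    a ∈ F.names ↔ ∃ S ∈ F.subs, S.name = a := by
  induction F with
  | one n => simp [Formula.names, Formula.subs, Formula.name, eq_comm]
  | bot n => simp [Formula.names, Formula.subs, Formula.name, eq_comm]
  | parr n A B ihA ihB =>
    simp only [Formula.names, Formula.subs, Finset.mem_insert, Finset.mem_union,
      List.mem_cons, List.mem_append, ihA, ihB]
    constructor
    · rintro (rfl | ⟨S, hS, rfl⟩ | ⟨S, hS, rfl⟩)
      · exact ⟨parr a A B, Or.inl rfl, rfl⟩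
      · exact ⟨S, Or.inr (Or.inl hS), rfl⟩
      · exact ⟨S, Or.inr (Or.inr hS), rfl⟩
    · rintro ⟨S, (rfl | hS | hS), rfl⟩
      · exact Or.inl rfl
      · exact Or.inr (Or.inl ⟨S, hS, rfl⟩)
      · exact Or.inr (Or.inr ⟨S, hS, rfl⟩)
  | tens n A B ihA ihB =>
    simp only [Formula.names, Formula.subs, Finset.mem_insert, Finset.mem_union,
      List.mem_cons, List.mem_append, ihA, ihB]
    constructor
    · rintro (rfl | ⟨S, hS, rfl⟩ | ⟨S, hS, rfl⟩)
      · exact ⟨tens a A B, Or.inl rfl, rfl⟩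
      · exact ⟨S, Or.inr (Or.inl hS), rfl⟩
      · exact ⟨S, Or.inr (Or.inr hS), rfl⟩
    · rintro ⟨S, (rfl | hS | hS), rfl⟩
      · exact Or.inl rfl
      · exact Or.inr (Or.inl ⟨S, hS, rfl⟩)
      · exact Or.inr (Or.inr ⟨S, hS, rfl⟩)

lemma seqSubs_cons (A : Formula) (Γ : Sequent) :
    seqSubs (A ::ₘ Γ) = (A.subs : Multiset Formula) + seqSubs Γ := by
  simp [seqSubs, Multiset.cons_bind]

lemma seqSubs_add (Γ Δ : Sequent) :
    seqSubs (Γ + Δ) = seqSubs Γ + seqSubs Δ := by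
  simp [seqSubs, Multiset.add_bind]

lemma seqNames_cons (A : Formula) (Γ : Sequent) :
    seqNames (A ::ₘ Γ) = A.names ∪ seqNames Γ := by
  simp [seqNames, Multiset.sup_cons, Finset.sup_eq_union]

lemma seqNames_add (Γ Δ : Sequent) :
    seqNames (Γ + Δ) = seqNames Γ ∪ seqNames Δ := by
  simp [seqNames, Multiset.sup_add, Finset.sup_eq_union]

lemma mem_seqNames_iff' {Γ : Sequent} {a : ℕ} :
    a ∈ seqNames Γ ↔ ∃ F ∈ Γ, a ∈ F.names := by
  induction Γ using Multiset.induction with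
  | empty => simp [seqNames]
  | cons A Γ ih =>
    rw [seqNames_cons]
    simp only [Finset.mem_union, Multiset.mem_cons, ih]
    constructor
    · rintro (h | ⟨F, hF, h⟩)
      · exact ⟨A, Or.inl rfl, h⟩
      · exact ⟨F, Or.inr hF, h⟩
    · rintro ⟨F, rfl | hF, h⟩
      · exact Or.inl h
      · exact Or.inr ⟨F, hF, h⟩

lemma mem_seqNames_iff {Γ : Sequent} {a : ℕ} :
    a ∈ seqNames Γ ↔ ∃ S, S ∈ seqSubs Γ ∧ S.name = a := by
  simp only [mem_seqNames_iff', seqSubs, Multiset.mem_bind, Formula.mem_names_iff]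
  constructor
  · rintro ⟨F, hF, S, hS, rfl⟩
    exact ⟨S, ⟨F, hF, by simpa using hS⟩, rfl⟩
  · rintro ⟨S, ⟨F, hF, hS⟩, rfl⟩
    exact ⟨F, hF, S, by simpa using hS, rfl⟩

lemma name_mem_seqNames {Γ : Sequent} {S : Formula} (h : S ∈ seqSubs Γ) :
    S.name ∈ seqNames Γ := mem_seqNames_iff.2 ⟨S, h, rfl⟩

lemma hasSub_sub {Γ : Sequent} {S T : Formula} (hS : HasSub Γ S) (hT : T ∈ S.subs) :
    HasSub Γ T := by
  simp only [HasSub, seqSubs, Multiset.mem_bind] at hS ⊢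
  obtain ⟨F, hF, hS⟩ := hS
  exact ⟨F, hF, by simpa using Formula.subs_trans (by simpa using hS) hT⟩

/-- Uniqueness of occurrences with a given name, under well-namedness. -/
lemma wellNamed_unique {Γ : Sequent} (hW : WellNamed Γ) {S T : Formula}
    (hS : S ∈ seqSubs Γ) (hT : T ∈ seqSubs Γ) (h : S.name = T.name) : S = T :=
  Multiset.inj_on_of_nodup_map hW S hS T hT h

lemma seqSubs_le_of_le {Γ Δ : Sequent} (h : Γ ≤ Δ) : seqSubs Γ ≤ seqSubs Δ := by
  obtain ⟨u, rfl⟩ := Multiset.le_iff_exists_add.1 h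
  rw [seqSubs_add]
  exact Multiset.le_add_right _ _

lemma WellNamed.of_le {Γ Δ : Sequent} (h : Γ ≤ Δ) (hW : WellNamed Δ) : WellNamed Γ :=
  Multiset.nodup_of_le (Multiset.map_le_map (seqSubs_le_of_le h)) hW

end MLL
namespace MLL

/-! ### Basicness -/

lemma IsBasicFormula.of_sub {F S : Formula} (hF : IsBasicFormula F) (hS : S ∈ F.subs) :
    IsBasicFormula S := by
  induction F with
  | one n => simp [Formula.subs] at hS; subst hS; trivial
  | bot n => simp [Formula.subs] at hS; subst hS; trivial
  | parr n A B ihA ihB => exact absurd hF id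
  | tens n A B ihA ihB =>
    simp only [Formula.subs, List.mem_cons, List.mem_append] at hS
    rcases hS with rfl | hS | hS
    · exact hF
    · exact ihA hF.1 hS
    · exact ihB hF.2 hS

lemma no_parr {Γ : Sequent} (hB : IsBasic Γ) {n : ℕ} {A B : Formula} :
    ¬ HasSub Γ (Formula.parr n A B) := by
  intro h
  simp only [HasSub, seqSubs, Multiset.mem_bind, Multiset.mem_coe] at h
  obtain ⟨F, hF, hsub⟩ := h
  exact (hB F hF).of_sub hsub

lemma IsBasicFormula.parrCount_eq_zero {F : Formula} (h : IsBasicFormula F) :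
    F.parrCount = 0 := by
  induction F with
  | one n => rfl
  | bot n => rfl
  | parr n A B ihA ihB => exact absurd h id
  | tens n A B ihA ihB => simp [Formula.parrCount, ihA h.1, ihB h.2]

/-! ### Switch adjacency for basic sequents -/

lemma switchAdj_iff {Γ : Sequent} (hB : IsBasic Γ) (lk : Linking) (σ : Switching)
    {x y : ℕ} : switchAdj Γ lk σ x y ↔
      (∃ A B, HasSub Γ (.tens x A B) ∧ (y = A.name ∨ y = B.name)) ∨
      (IsBotName Γ x ∧ y = lk x) := by
  unfold switchAdj
  constructor
  · rintro (h | h | h)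
    · exact Or.inl h
    · obtain ⟨A, B, hA, _⟩ := h
      exact absurd hA (no_parr hB)
    · exact Or.inr h
  · rintro (h | h)
    · exact Or.inl h
    · exact Or.inr (Or.inr h)

lemma switchGraph_adj_iff {Γ : Sequent} (hB : IsBasic Γ) (lk : Linking) (σ : Switching)
    {x y : ℕ} : (switchGraph Γ lk σ).Adj x y ↔
      x ≠ y ∧ (switchAdj Γ lk σ x y ∨ switchAdj Γ lk σ y x) := by
  rw [switchGraph, SimpleGraph.fromRel_adj]

/-! ### Decomposition lemmas -/

lemma hasSub_cons_iff {A : Formula} {Γ : Sequent} {S : Formula} :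
    HasSub (A ::ₘ Γ) S ↔ S ∈ A.subs ∨ HasSub Γ S := by
  simp [HasSub, seqSubs_cons]

lemma hasSub_add_iff {Γ Δ : Sequent} {S : Formula} :
    HasSub (Γ + Δ) S ↔ HasSub Γ S ∨ HasSub Δ S := by
  simp [HasSub, seqSubs_add]

lemma isBotName_cons_iff {A : Formula} {Γ : Sequent} {a : ℕ} :
    IsBotName (A ::ₘ Γ) a ↔ (Formula.bot a) ∈ A.subs ∨ IsBotName Γ a :=
  hasSub_cons_iff

lemma isBotName_add_iff {Γ Δ : Sequent} {a : ℕ} :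
    IsBotName (Γ + Δ) a ↔ IsBotName Γ a ∨ IsBotName Δ a :=
  hasSub_add_iff

lemma botName_mem_seqNames {Γ : Sequent} {a : ℕ} (h : IsBotName Γ a) :
    a ∈ seqNames Γ := name_mem_seqNames h

/-! ### Balance arithmetic -/

lemma balance_cons_bot (a : ℕ) (Γ : Sequent) :
    balance (Formula.bot a ::ₘ Γ) = balance Γ := by
  simp only [balance, Multiset.map_cons, Multiset.sum_cons, Multiset.card_cons,
    Formula.botCount, Formula.parrCount]
  push_cast
  ring

lemma botCount_eq_zero_of_one {Γ : Sequent} (h : ∀ A ∈ Γ, ∃ m, A = Formula.one m) :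
    (Γ.map Formula.botCount).sum = 0 := by
  rw [Multiset.sum_eq_zero]
  intro x hx
  obtain ⟨A, hA, rfl⟩ := Multiset.mem_map.1 hx
  obtain ⟨m, rfl⟩ := h A hA
  rfl

lemma parrCount_sum_eq_zero {Γ : Sequent} (hB : IsBasic Γ) :
    (Γ.map Formula.parrCount).sum = 0 := by
  rw [Multiset.sum_eq_zero]
  intro x hx
  obtain ⟨A, hA, rfl⟩ := Multiset.mem_map.1 hx
  exact (hB A hA).parrCount_eq_zero

end MLL
namespace MLL

/-! ### The abstract tree lemma: a graph given by a parent function is a tree -/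

section Tree

open SimpleGraph

lemma tree_of_parent (s : Finset ℕ) (rt : ℕ) (hrt : rt ∈ s) (p f : ℕ → ℕ)
    (hp : ∀ x ∈ s, x ≠ rt → p x ∈ s ∧ f (p x) < f x)
    (H : SimpleGraph ℕ)
    (hadj : ∀ x y, x ∈ s → y ∈ s →
      (H.Adj x y ↔ ((x ≠ rt ∧ p x = y) ∨ (y ≠ rt ∧ p y = x)))) :
    (H.induce {x : ℕ | x ∈ s}).IsTree := by
  set S : Set ℕ := {x : ℕ | x ∈ s} with hS
  set G : SimpleGraph S := H.induce S with hG
  have hGadj : ∀ (u v : S), G.Adj u v ↔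
      ((u.1 ≠ rt ∧ p u.1 = v.1) ∨ (v.1 ≠ rt ∧ p v.1 = u.1)) := by
    intro u v
    exact hadj u.1 v.1 u.2 v.2
  have hrt' : rt ∈ S := hrt
  -- connectivity
  have reach : ∀ n, ∀ u (hu : u ∈ S), f u < n → G.Reachable ⟨u, hu⟩ ⟨rt, hrt'⟩ := by
    intro n
    induction n with
    | zero => intro u hu h; omega
    | succ n ih =>
      intro u hu h
      by_cases hur : u = rt
      · subst hur; exact Reachable.refl _
      · obtain ⟨hps, hf⟩ := hp u hu hur
        have hadj' : G.Adj ⟨u, hu⟩ ⟨p u, hps⟩ := (hGadj _ _).2 (Or.inl ⟨hur, rfl⟩)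
        exact hadj'.reachable.trans (ih (p u) hps (by omega))
  have hconn : G.Connected := by
    rw [connected_iff]
    refine ⟨fun u v => ?_, ⟨⟨rt, hrt'⟩⟩⟩
    exact (reach (f u.1 + 1) u.1 u.2 (by omega)).trans
      (reach (f v.1 + 1) v.1 v.2 (by omega)).symm
  -- the "descendants" invariant, used for acyclicity
  refine ⟨hconn, ?_⟩
  rw [isAcyclic_iff_forall_adj_isBridge]
  -- a directed helper
  have main : ∀ (v w : S), G.Adj v w → v.1 ≠ rt → p v.1 = w.1 →
      ¬ (G \ fromEdgeSet {s(v, w)}).Reachable v w := by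
    intro v w hvw hvrt hpv hbad
    set step : ℕ → ℕ → Prop := fun a b => a ∈ s ∧ a ≠ rt ∧ b = p a with hstep
    set D : ℕ → Prop := fun z => Relation.ReflTransGen step z v.1 with hD
    have fmono : ∀ {a b : ℕ}, Relation.ReflTransGen step a b → f b ≤ f a := by
      intro a b h
      induction h with
      | refl => exact le_rfl
      | tail hab hbc ih =>
        obtain ⟨hmem, hne, rfl⟩ := hbc
        exact le_trans (le_of_lt (hp _ hmem hne).2) ih
    have hDv : D v.1 := Relation.ReflTransGen.refl
    have hDw : ¬ D w.1 := by
      intro h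
      rw [hD] at h
      have h1 : f v.1 ≤ f w.1 := fmono h
      have h2 : f w.1 < f v.1 := by
        rw [← hpv] at h1 ⊢
        exact (hp v.1 v.2 hvrt).2
      omega
    -- invariant along edges of the deleted graph
    have inv1 : ∀ (a b : S), G.Adj a b → s(a, b) ≠ s(v, w) →
        a.1 ≠ rt → p a.1 = b.1 → (D a.1 ↔ D b.1) := by
      intro a b hab hne hart hpa
      constructor
      · intro hDa
        rcases Relation.ReflTransGen.cases_head hDa with h | ⟨c, hc, hchain⟩
        · -- a.1 = v.1, so b = w, contradicting hne
          exfalso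
          have hav : a = v := Subtype.ext h
          subst hav
          have hbw : b = w := Subtype.ext (by rw [← hpa, ← hpv])
          subst hbw
          exact hne rfl
        · obtain ⟨_, _, rfl⟩ := hc
          exact hpa ▸ hchain
      · intro hDb
        exact Relation.ReflTransGen.head ⟨a.2, hart, hpa.symm⟩ hDb
    have inv : ∀ (a b : S), (G \ fromEdgeSet {s(v, w)}).Adj a b → (D a.1 ↔ D b.1) := by
      intro a b hab
      rw [SimpleGraph.sdiff_adj, SimpleGraph.fromEdgeSet_adj] at hab
      obtain ⟨hab, hne⟩ := hab
      have hne' : s(a, b) ≠ s(v, w) := by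
        intro h
        exact hne ⟨by simp [h], hab.ne⟩
      rcases (hGadj a b).1 hab with ⟨h1, h2⟩ | ⟨h1, h2⟩
      · exact inv1 a b hab hne' h1 h2
      · have := inv1 b a hab.symm (by rwa [Sym2.eq_swap]) h1 h2
        exact this.symm
    obtain ⟨wk⟩ := hbad
    have key : ∀ (a b : S) (wk : (G \ fromEdgeSet {s(v, w)}).Walk a b), D a.1 ↔ D b.1 := by
      intro a b wk
      induction wk with
      | nil => exact Iff.rfl
      | cons h _ ih => exact (inv _ _ h).trans ih
    exact hDw ((key v w wk).1 hDv)
  intro v w hvw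
  rw [SimpleGraph.isBridge_iff]
  rcases (hGadj v w).1 hvw with ⟨h1, h2⟩ | ⟨h1, h2⟩
  · exact main v w hvw h1 h2
  · intro hbad
    rw [Sym2.eq_swap] at hbad
    exact main w v hvw.symm h1 h2 hbad.symm
end Tree

end MLL
namespace MLL

/-- A spanning-tree structure for the switching graphs of `(Γ, lk)`:
a root and a parent function decreasing a measure `f`, whose associated
symmetric relation coincides with switch adjacency on the names of `Γ`. -/
structure Span (Γ : Sequent) (lk : Linking) (p f : ℕ → ℕ) (rt : ℕ) : Prop where
  rt_mem : rt ∈ seqNames Γ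
  valid : ValidLinking Γ lk
  parent : ∀ x ∈ seqNames Γ, x ≠ rt → p x ∈ seqNames Γ ∧ f (p x) < f x
  adj : ∀ (σ : Switching) (x y : ℕ), x ∈ seqNames Γ → y ∈ seqNames Γ →
    ((switchGraph Γ lk σ).Adj x y ↔ ((x ≠ rt ∧ p x = y) ∨ (y ≠ rt ∧ p y = x)))

/-- Re-rooting step: move the root to a child of the root. -/
lemma Span.step {Γ : Sequent} {lk : Linking} {p f : ℕ → ℕ} {rt : ℕ}
    (sp : Span Γ lk p f rt) {x : ℕ} (hx : x ∈ seqNames Γ) (hxrt : x ≠ rt)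
    (hpx : p x = rt) : ∃ p' f', Span Γ lk p' f' x := by
  refine ⟨fun z => if z = rt then x else p z, fun z => if z = x then 0 else f z + 1, ?_, sp.valid, ?_, ?_⟩
  · exact hx
  · intro z hz hzx
    by_cases hzrt : z = rt
    · subst hzrt
      simp only [if_pos rfl, if_neg (Ne.symm hzx)]
      exact ⟨hx, by simp [hzx]⟩
    · obtain ⟨h1, h2⟩ := sp.parent z hz hzrt
      refine ⟨by simp [if_neg hzrt, h1], ?_⟩
      simp only [if_neg hzrt, if_neg hzx]
      by_cases hpzx : p z = x
      · simp [hpzx]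
      · simp only [if_neg hpzx]
        omega
  · intro σ u v hu hv
    rw [sp.adj σ u v hu hv]
    constructor
    · rintro (⟨h1, h2⟩ | ⟨h1, h2⟩)
      · by_cases hux : u = x
        · subst hux
          refine Or.inr ⟨?_, ?_⟩
          · rw [← h2, hpx]; exact Ne.symm hxrt
          · rw [← h2, hpx]; simp
        · exact Or.inl ⟨hux, by simp [if_neg h1, h2]⟩
      · by_cases hvx : v = x
        · subst hvx
          refine Or.inl ⟨?_, ?_⟩
          · rw [← h2, hpx]; exact Ne.symm hxrt
          · rw [← h2, hpx]; simp
        · exact Or.inr ⟨hvx, by simp [if_neg h1, h2]⟩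
    · rintro (⟨h1, h2⟩ | ⟨h1, h2⟩)
      · by_cases hurt : u = rt
        · subst hurt
          simp only [if_pos rfl] at h2
          subst h2
          exact Or.inr ⟨hxrt, hpx⟩
        · simp only [if_neg hurt] at h2
          exact Or.inl ⟨hurt, h2⟩
      · by_cases hvrt : v = rt
        · subst hvrt
          simp only [if_pos rfl] at h2
          subst h2
          exact Or.inl ⟨hxrt, hpx⟩
        · simp only [if_neg hvrt] at h2
          exact Or.inr ⟨hvrt, h2⟩

/-- Re-rooting a spanning structure at an arbitrary name. -/
lemma Span.reroot {Γ : Sequent} {lk : Linking} {p f : ℕ → ℕ} {rt : ℕ}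
    (sp : Span Γ lk p f rt) {x : ℕ} (hx : x ∈ seqNames Γ) :
    ∃ p' f', Span Γ lk p' f' x := by
  suffices h : ∀ n x, x ∈ seqNames Γ → f x < n → ∃ p' f', Span Γ lk p' f' x from
    h (f x + 1) x hx (by omega)
  intro n
  induction n with
  | zero => intro x hx h; omega
  | succ n ih =>
    intro x hx hfx
    by_cases hxrt : x = rt
    · subst hxrt; exact ⟨p, f, sp⟩
    · obtain ⟨h1, h2⟩ := sp.parent x hx hxrt
      obtain ⟨p', f', sp'⟩ := ih (p x) h1 (by omega)
      -- `x` is adjacent to `p x` in the switching graph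
      have hadj : (switchGraph Γ lk (fun _ => true)).Adj x (p x) :=
        (sp.adj _ x (p x) hx h1).2 (Or.inl ⟨hxrt, rfl⟩)
      rcases (sp'.adj _ x (p x) hx h1).1 hadj with ⟨h3, h4⟩ | ⟨h3, h4⟩
      · exact sp'.step hx h3 h4
      · exact absurd rfl h3
end MLL
namespace MLL

lemma switchAdj_mem {Γ : Sequent} {lk : Linking} {σ : Switching} {u v : ℕ}
    (hval : ValidLinking Γ lk) (h : switchAdj Γ lk σ u v) :
    u ∈ seqNames Γ ∧ v ∈ seqNames Γ := by
  rcases h with ⟨A, B, hT, hy⟩ | ⟨A, B, hT, hy⟩ | ⟨hb, hy⟩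
  · refine ⟨name_mem_seqNames hT, ?_⟩
    rcases hy with rfl | rfl
    · exact name_mem_seqNames (hasSub_sub hT (by
        simp [Formula.subs, Formula.self_mem_subs]))
    · exact name_mem_seqNames (hasSub_sub hT (by
        simp [Formula.subs, Formula.self_mem_subs]))
  · refine ⟨name_mem_seqNames hT, ?_⟩
    subst hy
    by_cases hσ : σ u
    · simp only [if_pos hσ]
      exact name_mem_seqNames (hasSub_sub hT (by
        simp [Formula.subs, Formula.self_mem_subs]))
    · simp only [if_neg hσ]
      exact name_mem_seqNames (hasSub_sub hT (by
        simp [Formula.subs, Formula.self_mem_subs]))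
  · subst hy
    exact ⟨botName_mem_seqNames hb, hval u hb⟩

/-- Base case: the singleton sequent `1ₘ`. -/
lemma span_one (m : ℕ) : ∃ lk p f rt, Span ({Formula.one m} : Sequent) lk p f rt := by
  have hnames : seqNames ({Formula.one m} : Sequent) = {m} := by
    show seqNames (Formula.one m ::ₘ 0) = {m}
    rw [seqNames_cons]
    simp [seqNames, Formula.names]
  have hsubs : seqSubs ({Formula.one m} : Sequent) = {Formula.one m} := by
    show seqSubs (Formula.one m ::ₘ 0) = {Formula.one m}
    rw [seqSubs_cons]
    simp [seqSubs, Formula.subs]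
  refine ⟨id, id, id, m, ?_, ?_, ?_, ?_⟩
  · simp [hnames]
  · intro b hb
    rw [IsBotName, HasSub, hsubs] at hb
    simp at hb
  · intro x hx hxm
    rw [hnames] at hx
    simp at hx
    exact absurd hx hxm
  · intro σ u v hu hv
    rw [hnames] at hu hv
    simp only [Finset.mem_singleton] at hu hv
    subst hu; subst hv
    constructor
    · intro h
      exact absurd rfl h.ne
    · rintro (⟨h, _⟩ | ⟨h, _⟩) <;> exact absurd rfl h

/-- Glue for the `⊥` case: `Γ = ⊥ₐ ::ₘ Γ'`. -/
lemma span_bot {Γ' : Sequent} {a : ℕ} (hW : WellNamed (Formula.bot a ::ₘ Γ'))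
    {lk' p' f' : ℕ → ℕ} {rt' : ℕ} (sp : Span Γ' lk' p' f' rt') :
    ∃ lk p f, Span (Formula.bot a ::ₘ Γ') lk p f rt' := by
  set Γ : Sequent := Formula.bot a ::ₘ Γ' with hΓ
  have hna : a ∉ seqNames Γ' := by
    intro hmem
    obtain ⟨S, hS, hSname⟩ := mem_seqNames_iff.1 hmem
    have hsubs : seqSubs Γ = Formula.bot a ::ₘ seqSubs Γ' := by
      rw [hΓ, seqSubs_cons]; simp [Formula.subs]
    have := hW
    rw [WellNamed, hsubs, Multiset.map_cons, Multiset.nodup_cons] at this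
    exact this.1 (Multiset.mem_map.2 ⟨S, hS, hSname⟩)
  have hnames : seqNames Γ = insert a (seqNames Γ') := by
    rw [hΓ, seqNames_cons]
    simp only [Formula.names]
    exact (Finset.insert_eq _ _).symm
  have hrt'a : rt' ≠ a := fun h => hna (h ▸ sp.rt_mem)
  have hbotdec : ∀ x, IsBotName Γ x ↔ x = a ∨ IsBotName Γ' x := by
    intro x
    rw [hΓ, isBotName_cons_iff]
    simp [Formula.subs, Formula.bot.injEq]
  have hbot' : ∀ x, IsBotName Γ' x → x ≠ a := by
    intro x hx h
    exact hna (h ▸ botName_mem_seqNames hx)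
  set lk : Linking := fun b => if b = a then rt' else lk' b with hlk
  set p : ℕ → ℕ := fun x => if x = a then rt' else p' x with hp
  set f : ℕ → ℕ := fun x => if x = a then (seqNames Γ').sup f' + 1 else f' x with hf
  have hpne : ∀ {x : ℕ}, x ∈ seqNames Γ' → p x = p' x := by
    intro x hx
    have hxa : x ≠ a := fun hh => hna (hh ▸ hx)
    simp [hp, hxa]
  -- decomposition of switch adjacency
  have hsdec : ∀ σ u v, switchAdj Γ lk σ u v ↔
      ((u = a ∧ v = rt') ∨ switchAdj Γ' lk' σ u v) := by
    intro σ u v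
    constructor
    · rintro (⟨A, B, hT, hy⟩ | ⟨A, B, hT, hy⟩ | ⟨hb, rfl⟩)
      · rw [hΓ, hasSub_cons_iff] at hT
        rcases hT with hT | hT
        · simp [Formula.subs] at hT
        · exact Or.inr (Or.inl ⟨A, B, hT, hy⟩)
      · rw [hΓ, hasSub_cons_iff] at hT
        rcases hT with hT | hT
        · simp [Formula.subs] at hT
        · exact Or.inr (Or.inr (Or.inl ⟨A, B, hT, hy⟩))
      · rcases (hbotdec u).1 hb with rfl | hb'
        · exact Or.inl ⟨rfl, by simp [hlk]⟩
        · refine Or.inr (Or.inr (Or.inr ⟨hb', ?_⟩))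
          simp [hlk, hbot' u hb']
    · rintro (⟨rfl, rfl⟩ | h)
      · refine Or.inr (Or.inr ⟨(hbotdec u).2 (Or.inl rfl), by simp [hlk]⟩)
      · rcases h with ⟨A, B, hT, hy⟩ | ⟨A, B, hT, hy⟩ | ⟨hb, rfl⟩
        · exact Or.inl ⟨A, B, (hasSub_cons_iff).2 (Or.inr hT), hy⟩
        · exact Or.inr (Or.inl ⟨A, B, (hasSub_cons_iff).2 (Or.inr hT), hy⟩)
        · refine Or.inr (Or.inr ⟨(hbotdec u).2 (Or.inr hb), ?_⟩)
          simp [hlk, hbot' u hb]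
  refine ⟨lk, p, f, ?_, ?_, ?_, ?_⟩
  · rw [hnames]; exact Finset.mem_insert_of_mem sp.rt_mem
  · intro b hb
    rcases (hbotdec b).1 hb with rfl | hb'
    · rw [hnames]
      simp only [hlk, if_pos rfl]
      exact Finset.mem_insert_of_mem sp.rt_mem
    · rw [hnames]
      simp only [hlk, if_neg (hbot' b hb')]
      exact Finset.mem_insert_of_mem (sp.valid b hb')
  · intro x hx hxrt
    rw [hnames, Finset.mem_insert] at hx
    rcases hx with rfl | hx
    · simp only [hp, hf, if_pos rfl]
      rw [hnames]
      refine ⟨Finset.mem_insert_of_mem sp.rt_mem, ?_⟩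
      rw [if_neg hrt'a]
      have := Finset.le_sup (f := f') sp.rt_mem
      omega
    · have hxa : x ≠ a := fun h => hna (h ▸ hx)
      obtain ⟨h1, h2⟩ := sp.parent x hx hxrt
      have hpxa : p' x ≠ a := fun h => hna (h ▸ h1)
      refine ⟨?_, ?_⟩
      · simp only [hp, if_neg hxa]
        rw [hnames]
        exact Finset.mem_insert_of_mem h1
      · simp only [hp, hf, if_neg hxa, if_neg hpxa]
        exact h2
  · intro σ u v hu hv
    rw [switchGraph, SimpleGraph.fromRel_adj]
    rw [hnames, Finset.mem_insert] at hu hv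
    constructor
    · rintro ⟨hne, h | h⟩ <;> rcases (hsdec σ _ _).1 h with ⟨rfl, rfl⟩ | h'
      · exact Or.inl ⟨Ne.symm hrt'a, by simp [hp]⟩
      · -- an edge of Γ'
        obtain ⟨hu', hv'⟩ := switchAdj_mem sp.valid h'
        have := (sp.adj σ u v hu' hv').1 (by
          rw [switchGraph, SimpleGraph.fromRel_adj]
          exact ⟨hne, Or.inl h'⟩)
        rcases this with ⟨h1, h2⟩ | ⟨h1, h2⟩
        · exact Or.inl ⟨h1, by rw [hpne hu']; exact h2⟩
        · exact Or.inr ⟨h1, by rw [hpne hv']; exact h2⟩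
      · exact Or.inr ⟨Ne.symm hrt'a, by simp [hp]⟩
      · obtain ⟨hv', hu'⟩ := switchAdj_mem sp.valid h'
        have := (sp.adj σ u v hu' hv').1 (by
          rw [switchGraph, SimpleGraph.fromRel_adj]
          exact ⟨hne, Or.inr h'⟩)
        rcases this with ⟨h1, h2⟩ | ⟨h1, h2⟩
        · exact Or.inl ⟨h1, by rw [hpne hu']; exact h2⟩
        · exact Or.inr ⟨h1, by rw [hpne hv']; exact h2⟩
    · have lift : ∀ x y, (x = a ∨ x ∈ seqNames Γ') → x ≠ rt' → p x = y →
          x ≠ y ∧ (switchAdj Γ lk σ x y ∨ switchAdj Γ lk σ y x) := by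
        intro x y hx hxrt hpxy
        rcases hx with rfl | hx
        · simp only [hp, if_pos rfl] at hpxy
          subst hpxy
          exact ⟨Ne.symm hrt'a, Or.inl ((hsdec σ _ _).2 (Or.inl ⟨rfl, rfl⟩))⟩
        · have hxa : x ≠ a := fun h => hna (h ▸ hx)
          simp only [hp, if_neg hxa] at hpxy
          obtain ⟨h1, _⟩ := sp.parent x hx hxrt
          rw [hpxy] at h1
          have := (sp.adj σ x y hx h1).2 (Or.inl ⟨hxrt, hpxy⟩)
          rw [switchGraph, SimpleGraph.fromRel_adj] at this
          obtain ⟨hne, h⟩ := this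
          rcases h with h | h
          · exact ⟨hne, Or.inl ((hsdec σ _ _).2 (Or.inr h))⟩
          · exact ⟨hne, Or.inr ((hsdec σ _ _).2 (Or.inr h))⟩
      rintro (⟨h1, h2⟩ | ⟨h1, h2⟩)
      · exact lift u v hu h1 h2
      · obtain ⟨hne, h⟩ := lift v u hv h1 h2
        exact ⟨Ne.symm hne, h.symm⟩

end MLL
namespace MLL

/-- Glue for the `⊗` case. -/
lemma span_tens {Γ₁ Γ₂ : Sequent} {n : ℕ} {A B : Formula}
    (hW : WellNamed (Formula.tens n A B ::ₘ (Γ₁ + Γ₂)))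
    {lk₁ p₁ f₁ lk₂ p₂ f₂ : ℕ → ℕ}
    (sp₁ : Span (A ::ₘ Γ₁) lk₁ p₁ f₁ A.name)
    (sp₂ : Span (B ::ₘ Γ₂) lk₂ p₂ f₂ B.name) :
    ∃ lk p f, Span (Formula.tens n A B ::ₘ (Γ₁ + Γ₂)) lk p f n := by
  classical
  set Γ : Sequent := Formula.tens n A B ::ₘ (Γ₁ + Γ₂) with hΓ
  set S₁ : Sequent := A ::ₘ Γ₁ with hS₁
  set S₂ : Sequent := B ::ₘ Γ₂ with hS₂
  set N₁ : Finset ℕ := seqNames S₁ with hN₁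
  set N₂ : Finset ℕ := seqNames S₂ with hN₂
  have eq1 : seqSubs Γ = Formula.tens n A B ::ₘ (seqSubs S₁ + seqSubs S₂) := by
    rw [hΓ, seqSubs_cons, seqSubs_add, hS₁, hS₂, seqSubs_cons, seqSubs_cons]
    simp only [Formula.subs]
    rw [show (↑(Formula.tens n A B :: (A.subs ++ B.subs)) : Multiset Formula) =
        Formula.tens n A B ::ₘ ((↑A.subs : Multiset Formula) + ↑B.subs) from rfl,
      Multiset.cons_add]
    congr 1
    abel
  have hWdec := hW
  rw [WellNamed, eq1, Multiset.map_cons, Multiset.nodup_cons, Multiset.map_add,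
    Multiset.nodup_add] at hWdec
  obtain ⟨hn_notin, hnd₁, hnd₂, hdisjm⟩ := hWdec
  have hW₁ : WellNamed S₁ := hnd₁
  have hW₂ : WellNamed S₂ := hnd₂
  have hdisj : ∀ x, x ∈ N₁ → x ∉ N₂ := by
    intro x hx₁ hx₂
    obtain ⟨S, hS, hSn⟩ := mem_seqNames_iff.1 hx₁
    obtain ⟨T, hT, hTn⟩ := mem_seqNames_iff.1 hx₂
    exact Multiset.disjoint_left.1 hdisjm
      (Multiset.mem_map.2 ⟨S, hS, hSn⟩) (Multiset.mem_map.2 ⟨T, hT, hTn⟩)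
  have hnN₁ : n ∉ N₁ := by
    intro hx
    obtain ⟨S, hS, hSn⟩ := mem_seqNames_iff.1 hx
    exact hn_notin (Multiset.mem_add.2 (Or.inl (Multiset.mem_map.2 ⟨S, hS, hSn⟩)))
  have hnN₂ : n ∉ N₂ := by
    intro hx
    obtain ⟨S, hS, hSn⟩ := mem_seqNames_iff.1 hx
    exact hn_notin (Multiset.mem_add.2 (Or.inr (Multiset.mem_map.2 ⟨S, hS, hSn⟩)))
  have hnames : seqNames Γ = insert n (N₁ ∪ N₂) := by
    rw [hΓ, seqNames_cons, seqNames_add, hN₁, hN₂, hS₁, hS₂, seqNames_cons, seqNames_cons]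
    ext x
    simp only [Formula.names, Finset.mem_union, Finset.mem_insert]
    tauto
  have hsub1 : ∀ {S : Formula}, HasSub S₁ S → HasSub Γ S := by
    intro S h
    rw [HasSub, eq1, Multiset.mem_cons, Multiset.mem_add]
    exact Or.inr (Or.inl h)
  have hsub2 : ∀ {S : Formula}, HasSub S₂ S → HasSub Γ S := by
    intro S h
    rw [HasSub, eq1, Multiset.mem_cons, Multiset.mem_add]
    exact Or.inr (Or.inr h)
  have hsubdec : ∀ {S : Formula}, HasSub Γ S →
      S = Formula.tens n A B ∨ HasSub S₁ S ∨ HasSub S₂ S := by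
    intro S h
    rw [HasSub, eq1, Multiset.mem_cons, Multiset.mem_add] at h
    exact h
  have hbotdec : ∀ {x : ℕ}, IsBotName Γ x → IsBotName S₁ x ∨ IsBotName S₂ x := by
    intro x h
    rcases hsubdec h with h | h | h
    · exact absurd h (by simp)
    · exact Or.inl h
    · exact Or.inr h
  have hAmem : A.name ∈ N₁ := sp₁.rt_mem
  have hBmem : B.name ∈ N₂ := sp₂.rt_mem
  have hAn : A.name ≠ n := fun h => hnN₁ (h ▸ hAmem)
  have hBn : B.name ≠ n := fun h => hnN₂ (h ▸ hBmem)
  have hABne : A.name ≠ B.name := fun h => hdisj _ hAmem (h ▸ hBmem)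
  set lk : Linking := fun b => if b ∈ N₁ then lk₁ b else lk₂ b with hlk
  set p : ℕ → ℕ := fun x => if x = A.name ∨ x = B.name then n
      else if x ∈ N₁ then p₁ x else p₂ x with hp
  set f : ℕ → ℕ := fun x => if x = n then 0
      else if x ∈ N₁ then f₁ x + 1 else f₂ x + 1 with hf
  have hlk₁ : ∀ {b : ℕ}, b ∈ N₁ → lk b = lk₁ b := by
    intro b hb; simp [hlk, hb]
  have hlk₂ : ∀ {b : ℕ}, b ∈ N₂ → lk b = lk₂ b := by
    intro b hb
    have : b ∉ N₁ := fun h => hdisj b h hb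
    simp [hlk, this]
  have hpA : p A.name = n := by simp [hp]
  have hpB : p B.name = n := by simp [hp]
  have hp₁ : ∀ {x : ℕ}, x ∈ N₁ → x ≠ A.name → p x = p₁ x := by
    intro x hx hxA
    have hxB : x ≠ B.name := fun h => hdisj x hx (h ▸ hBmem)
    simp [hp, hxA, hxB, hx]
  have hp₂ : ∀ {x : ℕ}, x ∈ N₂ → x ≠ B.name → p x = p₂ x := by
    intro x hx hxB
    have hxN₁ : x ∉ N₁ := fun h => hdisj x h hx
    have hxA : x ≠ A.name := fun h => hxN₁ (h ▸ hAmem)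
    simp [hp, hxA, hxB, hxN₁]
  have hf₁ : ∀ {x : ℕ}, x ∈ N₁ → f x = f₁ x + 1 := by
    intro x hx
    have hxn : x ≠ n := fun h => hnN₁ (h ▸ hx)
    simp [hf, hxn, hx]
  have hf₂ : ∀ {x : ℕ}, x ∈ N₂ → f x = f₂ x + 1 := by
    intro x hx
    have hxn : x ≠ n := fun h => hnN₂ (h ▸ hx)
    have hxN₁ : x ∉ N₁ := fun h => hdisj x h hx
    simp [hf, hxn, hxN₁]
  -- decomposition of switch adjacency
  have hsdec : ∀ (σ : Switching) (u v : ℕ), switchAdj Γ lk σ u v ↔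
      ((u = n ∧ (v = A.name ∨ v = B.name)) ∨
        switchAdj S₁ lk₁ σ u v ∨ switchAdj S₂ lk₂ σ u v) := by
    intro σ u v
    constructor
    · rintro (⟨A', B', hT, hy⟩ | ⟨A', B', hT, hy⟩ | ⟨hb, rfl⟩)
      · rcases hsubdec hT with h | h | h
        · rw [Formula.tens.injEq] at h
          obtain ⟨rfl, rfl, rfl⟩ := h
          exact Or.inl ⟨rfl, hy⟩
        · exact Or.inr (Or.inl (Or.inl ⟨A', B', h, hy⟩))
        · exact Or.inr (Or.inr (Or.inl ⟨A', B', h, hy⟩))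
      · rcases hsubdec hT with h | h | h
        · simp at h
        · exact Or.inr (Or.inl (Or.inr (Or.inl ⟨A', B', h, hy⟩)))
        · exact Or.inr (Or.inr (Or.inr (Or.inl ⟨A', B', h, hy⟩)))
      · rcases hbotdec hb with hb' | hb'
        · exact Or.inr (Or.inl (Or.inr (Or.inr ⟨hb', hlk₁ (botName_mem_seqNames hb')⟩)))
        · exact Or.inr (Or.inr (Or.inr (Or.inr ⟨hb', hlk₂ (botName_mem_seqNames hb')⟩)))
    · rintro (⟨rfl, hv⟩ | h | h)
      · refine Or.inl ⟨A, B, ?_, hv⟩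
        rw [HasSub, eq1]
        exact Multiset.mem_cons_self _ _
      · rcases h with ⟨A', B', hT, hy⟩ | ⟨A', B', hT, hy⟩ | ⟨hb, rfl⟩
        · exact Or.inl ⟨A', B', hsub1 hT, hy⟩
        · exact Or.inr (Or.inl ⟨A', B', hsub1 hT, hy⟩)
        · exact Or.inr (Or.inr ⟨hsub1 hb, (hlk₁ (botName_mem_seqNames hb)).symm⟩)
      · rcases h with ⟨A', B', hT, hy⟩ | ⟨A', B', hT, hy⟩ | ⟨hb, rfl⟩
        · exact Or.inl ⟨A', B', hsub2 hT, hy⟩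
        · exact Or.inr (Or.inl ⟨A', B', hsub2 hT, hy⟩)
        · exact Or.inr (Or.inr ⟨hsub2 hb, (hlk₂ (botName_mem_seqNames hb)).symm⟩)
  have hne₁ : ∀ {x : ℕ}, x ∈ N₁ → x ≠ n := fun hx h => hnN₁ (h ▸ hx)
  have hne₂ : ∀ {x : ℕ}, x ∈ N₂ → x ≠ n := fun hx h => hnN₂ (h ▸ hx)
  refine ⟨lk, p, f, ?_, ?_, ?_, ?_⟩
  · rw [hnames]; exact Finset.mem_insert_self _ _
  · intro b hb
    rw [hnames]
    rcases hbotdec hb with hb' | hb'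
    · rw [hlk₁ (botName_mem_seqNames hb')]
      exact Finset.mem_insert_of_mem (Finset.mem_union_left _ (sp₁.valid b hb'))
    · rw [hlk₂ (botName_mem_seqNames hb')]
      exact Finset.mem_insert_of_mem (Finset.mem_union_right _ (sp₂.valid b hb'))
  · intro x hx hxn
    rw [hnames, Finset.mem_insert, Finset.mem_union] at hx
    rcases hx with rfl | hx | hx
    · exact absurd rfl hxn
    · by_cases hxA : x = A.name
      · subst hxA
        rw [hpA]
        refine ⟨by rw [hnames]; exact Finset.mem_insert_self _ _, ?_⟩
        rw [hf₁ hx]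
        simp [hf]
      · obtain ⟨m1, m2⟩ := sp₁.parent x hx hxA
        rw [hp₁ hx hxA]
        refine ⟨by rw [hnames]; exact Finset.mem_insert_of_mem (Finset.mem_union_left _ m1), ?_⟩
        rw [hf₁ m1, hf₁ hx]
        omega
    · by_cases hxB : x = B.name
      · subst hxB
        rw [hpB]
        refine ⟨by rw [hnames]; exact Finset.mem_insert_self _ _, ?_⟩
        rw [hf₂ hx]
        simp [hf]
      · obtain ⟨m1, m2⟩ := sp₂.parent x hx hxB
        rw [hp₂ hx hxB]
        refine ⟨by rw [hnames]; exact Finset.mem_insert_of_mem (Finset.mem_union_right _ m1), ?_⟩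
        rw [hf₂ m1, hf₂ hx]
        omega
  · intro σ u v hu hv
    rw [switchGraph, SimpleGraph.fromRel_adj]
    have lift1 : ∀ x y, x ≠ y → switchAdj Γ lk σ x y →
        ((x ≠ n ∧ p x = y) ∨ (y ≠ n ∧ p y = x)) := by
      intro x y hne h
      rcases (hsdec σ x y).1 h with ⟨rfl, hy⟩ | h | h
      · rcases hy with rfl | rfl
        · exact Or.inr ⟨hAn, hpA⟩
        · exact Or.inr ⟨hBn, hpB⟩
      · obtain ⟨hx', hy'⟩ := switchAdj_mem sp₁.valid h
        have := (sp₁.adj σ x y hx' hy').1 (by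
          rw [switchGraph, SimpleGraph.fromRel_adj]
          exact ⟨hne, Or.inl h⟩)
        rcases this with ⟨h1, h2⟩ | ⟨h1, h2⟩
        · exact Or.inl ⟨hne₁ hx', by rw [hp₁ hx' h1]; exact h2⟩
        · exact Or.inr ⟨hne₁ hy', by rw [hp₁ hy' h1]; exact h2⟩
      · obtain ⟨hx', hy'⟩ := switchAdj_mem sp₂.valid h
        have := (sp₂.adj σ x y hx' hy').1 (by
          rw [switchGraph, SimpleGraph.fromRel_adj]
          exact ⟨hne, Or.inl h⟩)
        rcases this with ⟨h1, h2⟩ | ⟨h1, h2⟩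
        · exact Or.inl ⟨hne₂ hx', by rw [hp₂ hx' h1]; exact h2⟩
        · exact Or.inr ⟨hne₂ hy', by rw [hp₂ hy' h1]; exact h2⟩
    have lift2 : ∀ x y, x ∈ seqNames Γ → x ≠ n → p x = y →
        x ≠ y ∧ (switchAdj Γ lk σ x y ∨ switchAdj Γ lk σ y x) := by
      intro x y hx hxn hpxy
      rw [hnames, Finset.mem_insert, Finset.mem_union] at hx
      rcases hx with rfl | hx | hx
      · exact absurd rfl hxn
      · by_cases hxA : x = A.name
        · subst hxA
          rw [hpA] at hpxy
          subst hpxy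
          exact ⟨hAn, Or.inr ((hsdec σ _ _).2 (Or.inl ⟨rfl, Or.inl rfl⟩))⟩
        · obtain ⟨m1, m2⟩ := sp₁.parent x hx hxA
          rw [hp₁ hx hxA] at hpxy
          subst hpxy
          have := (sp₁.adj σ x (p₁ x) hx m1).2 (Or.inl ⟨hxA, rfl⟩)
          rw [switchGraph, SimpleGraph.fromRel_adj] at this
          obtain ⟨hne, h | h⟩ := this
          · exact ⟨hne, Or.inl ((hsdec σ _ _).2 (Or.inr (Or.inl h)))⟩
          · exact ⟨hne, Or.inr ((hsdec σ _ _).2 (Or.inr (Or.inl h)))⟩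
      · by_cases hxB : x = B.name
        · subst hxB
          rw [hpB] at hpxy
          subst hpxy
          exact ⟨hBn, Or.inr ((hsdec σ _ _).2 (Or.inl ⟨rfl, Or.inr rfl⟩))⟩
        · obtain ⟨m1, m2⟩ := sp₂.parent x hx hxB
          rw [hp₂ hx hxB] at hpxy
          subst hpxy
          have := (sp₂.adj σ x (p₂ x) hx m1).2 (Or.inl ⟨hxB, rfl⟩)
          rw [switchGraph, SimpleGraph.fromRel_adj] at this
          obtain ⟨hne, h | h⟩ := this
          · exact ⟨hne, Or.inl ((hsdec σ _ _).2 (Or.inr (Or.inr h)))⟩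
          · exact ⟨hne, Or.inr ((hsdec σ _ _).2 (Or.inr (Or.inr h)))⟩
    constructor
    · rintro ⟨hne, h | h⟩
      · exact lift1 u v hne h
      · rcases lift1 v u (Ne.symm hne) h with ⟨h1, h2⟩ | ⟨h1, h2⟩
        · exact Or.inr ⟨h1, h2⟩
        · exact Or.inl ⟨h1, h2⟩
    · rintro (⟨h1, h2⟩ | ⟨h1, h2⟩)
      · exact lift2 u v hu h1 h2
      · obtain ⟨hne, h⟩ := lift2 v u hv h1 h2
        exact ⟨Ne.symm hne, h.symm⟩

end MLL
namespace MLL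

lemma exists_le_card {α : Type*} (t : Multiset α) (a : ℕ) (h : a ≤ Multiset.card t) :
    ∃ u, u ≤ t ∧ Multiset.card u = a := by
  induction t using Multiset.induction generalizing a with
  | empty =>
    simp only [Multiset.card_zero, Nat.le_zero] at h
    exact ⟨0, le_rfl, by simp [h]⟩
  | cons x t ih =>
    cases a with
    | zero => exact ⟨0, zero_le, rfl⟩
    | succ a =>
      obtain ⟨u, hu, hcard⟩ := ih a (by rw [Multiset.card_cons] at h; omega)
      exact ⟨x ::ₘ u, Multiset.cons_le_cons _ hu, by simp [hcard]⟩

lemma card_filter_ne_le_sum (Δ : Multiset Formula) :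
    Multiset.card (Δ.filter (fun C => ¬ C.botCount = 0)) ≤
      (Δ.map Formula.botCount).sum := by
  induction Δ using Multiset.induction with
  | empty => simp
  | cons C Δ ih =>
    rw [Multiset.filter_cons, Multiset.map_cons, Multiset.sum_cons]
    by_cases h : C.botCount = 0
    · simp only [h, not_true_eq_false, if_neg]
      simpa [h] using ih
    · simp only [h, not_false_eq_true, if_pos]
      rw [Multiset.card_add, Multiset.card_singleton]
      omega

/-- Splitting a balanced basic sequent at a tensor formula. -/
lemma tens_split {Δ : Sequent} {n : ℕ} {A B : Formula}
    (hB : IsBasic (Formula.tens n A B ::ₘ Δ))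
    (h : balance (Formula.tens n A B ::ₘ Δ) = 0) :
    ∃ Γ₁ Γ₂ : Sequent, Δ = Γ₁ + Γ₂ ∧
      balance (A ::ₘ Γ₁) = 0 ∧ balance (B ::ₘ Γ₂) = 0 := by
  classical
  have hT : IsBasicFormula (Formula.tens n A B) := hB _ (Multiset.mem_cons_self _ _)
  have hΔ : IsBasic Δ := fun C hC => hB C (Multiset.mem_cons_of_mem hC)
  have hps : ((Formula.tens n A B ::ₘ Δ).map Formula.parrCount).sum = 0 :=
    parrCount_sum_eq_zero hB
  rw [Multiset.map_cons, Multiset.sum_cons, Nat.add_eq_zero] at hps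
  -- the balance equation
  have hkey : A.botCount + B.botCount + (Δ.map Formula.botCount).sum = Multiset.card Δ := by
    rw [balance, Multiset.map_cons, Multiset.sum_cons, Multiset.map_cons,
      Multiset.sum_cons, Multiset.card_cons] at h
    have hbc : (Formula.tens n A B).botCount = A.botCount + B.botCount := rfl
    rw [hbc, hps.1, hps.2] at h
    omega
  -- enough zero-botCount formulas
  have hcards : Multiset.card (Δ.filter (fun C => C.botCount = 0)) +
      Multiset.card (Δ.filter (fun C => ¬ C.botCount = 0)) = Multiset.card Δ := by
    rw [← Multiset.card_add, Multiset.filter_add_not]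
  have hz : A.botCount ≤ Multiset.card (Δ.filter (fun C => C.botCount = 0)) := by
    have := card_filter_ne_le_sum Δ
    omega
  obtain ⟨Γ₁, hΓ₁le, hΓ₁card⟩ := exists_le_card _ _ hz
  have hΓ₁Δ : Γ₁ ≤ Δ := le_trans hΓ₁le (Multiset.filter_le _ _)
  have hΓ₁zero : ∀ C ∈ Γ₁, C.botCount = 0 := by
    intro C hC
    exact (Multiset.mem_filter.1 (Multiset.mem_of_le hΓ₁le hC)).2
  obtain ⟨Γ₂, rfl⟩ := Multiset.le_iff_exists_add.1 hΓ₁Δ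
  have hsum₁ : (Γ₁.map Formula.botCount).sum = 0 := by
    rw [Multiset.sum_eq_zero]
    intro x hx
    obtain ⟨C, hC, rfl⟩ := Multiset.mem_map.1 hx
    exact hΓ₁zero C hC
  have hsum : (Γ₁.map Formula.botCount).sum + (Γ₂.map Formula.botCount).sum =
      ((Γ₁ + Γ₂).map Formula.botCount).sum := by
    rw [Multiset.map_add, Multiset.sum_add]
  have hps₁ : (Γ₁.map Formula.parrCount).sum = 0 :=
    parrCount_sum_eq_zero (fun C hC => hΔ C (Multiset.mem_of_le (Multiset.le_add_right _ _) hC))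
  have hps₂ : (Γ₂.map Formula.parrCount).sum = 0 :=
    parrCount_sum_eq_zero (fun C hC => hΔ C (Multiset.mem_of_le (Multiset.le_add_left _ _) hC))
  have hcard : Multiset.card (Γ₁ + Γ₂) = Multiset.card Γ₁ + Multiset.card Γ₂ :=
    Multiset.card_add _ _
  refine ⟨Γ₁, Γ₂, rfl, ?_, ?_⟩
  · rw [balance, Multiset.map_cons, Multiset.sum_cons, Multiset.map_cons, Multiset.sum_cons,
      Multiset.card_cons, hsum₁, hps₁, IsBasicFormula.parrCount_eq_zero hT.1, hΓ₁card]
    push_cast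
    ring
  · rw [balance, Multiset.map_cons, Multiset.sum_cons, Multiset.map_cons, Multiset.sum_cons,
      Multiset.card_cons, hps₂, IsBasicFormula.parrCount_eq_zero hT.2]
    omega

lemma balance_ones {Γ : Sequent} (h : ∀ A ∈ Γ, ∃ m, A = Formula.one m)
    (hb : balance Γ = 0) : ∃ m, Γ = {Formula.one m} := by
  have h1 : (Γ.map Formula.botCount).sum = 0 := botCount_eq_zero_of_one h
  have h2 : (Γ.map Formula.parrCount).sum = 0 := by
    rw [Multiset.sum_eq_zero]
    intro x hx
    obtain ⟨A, hA, rfl⟩ := Multiset.mem_map.1 hx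
    obtain ⟨m, rfl⟩ := h A hA
    rfl
  rw [balance, h1, h2] at hb
  have hcard : Multiset.card Γ = 1 := by push_cast at hb; omega
  obtain ⟨A, rfl⟩ := Multiset.card_eq_one.1 hcard
  obtain ⟨m, rfl⟩ := h A (by simp)
  exact ⟨m, rfl⟩

lemma seqSubs_tens_split (n : ℕ) (A B : Formula) (Γ₁ Γ₂ : Sequent) :
    seqSubs (Formula.tens n A B ::ₘ (Γ₁ + Γ₂)) =
      Formula.tens n A B ::ₘ (seqSubs (A ::ₘ Γ₁) + seqSubs (B ::ₘ Γ₂)) := by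
  rw [seqSubs_cons, seqSubs_add, seqSubs_cons, seqSubs_cons]
  simp only [Formula.subs]
  rw [show (↑(Formula.tens n A B :: (A.subs ++ B.subs)) : Multiset Formula) =
      Formula.tens n A B ::ₘ ((↑A.subs : Multiset Formula) + ↑B.subs) from rfl,
    Multiset.cons_add]
  congr 1
  abel

lemma seqNames_self_mem {A : Formula} (Γ : Sequent) (h : A ∈ Γ) :
    A.name ∈ seqNames Γ := by
  refine name_mem_seqNames ?_
  rw [seqSubs]
  exact Multiset.mem_bind.2 ⟨A, h, by simpa using A.self_mem_subs⟩

lemma exists_proof : ∀ (N : ℕ) (Γ : Sequent), Multiset.card (seqSubs Γ) ≤ N →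
    IsBasic Γ → balance Γ = 0 → Nonempty (Proof Γ) := by
  intro N
  induction N with
  | zero =>
    intro Γ hcard hB hb
    by_cases hΓ : Γ = 0
    · subst hΓ
      rw [balance] at hb
      simp at hb
    · obtain ⟨A, hA⟩ := Multiset.exists_mem_of_ne_zero hΓ
      exfalso
      have : A ∈ seqSubs Γ := Multiset.mem_bind.2 ⟨A, hA, by simpa using A.self_mem_subs⟩
      have := Multiset.card_pos_iff_exists_mem.2 ⟨A, this⟩
      omega
  | succ N ih =>
    intro Γ hcard hB hb
    by_cases hbot : ∃ a, Formula.bot a ∈ Γ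
    · obtain ⟨a, ha⟩ := hbot
      obtain ⟨Γ', rfl⟩ := Multiset.exists_cons_of_mem ha
      have hb' : balance Γ' = 0 := by rwa [balance_cons_bot] at hb
      have hcard' : Multiset.card (seqSubs Γ') ≤ N := by
        rw [seqSubs_cons] at hcard
        simp [Formula.subs] at hcard
        omega
      obtain ⟨π⟩ := ih Γ' hcard' (fun C hC => hB C (Multiset.mem_cons_of_mem hC)) hb'
      exact ⟨Proof.bot a π⟩
    · by_cases htens : ∃ n A B, Formula.tens n A B ∈ Γ
      · obtain ⟨n, A, B, hT⟩ := htens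
        obtain ⟨Δ, rfl⟩ := Multiset.exists_cons_of_mem hT
        obtain ⟨Γ₁, Γ₂, rfl, hb₁, hb₂⟩ := tens_split hB hb
        have hTb : IsBasicFormula (Formula.tens n A B) := hB _ (Multiset.mem_cons_self _ _)
        have hB₁ : IsBasic (A ::ₘ Γ₁) := by
          intro C hC
          rcases Multiset.mem_cons.1 hC with rfl | hC
          · exact hTb.1
          · exact hB C (Multiset.mem_cons_of_mem (Multiset.mem_add.2 (Or.inl hC)))
        have hB₂ : IsBasic (B ::ₘ Γ₂) := by
          intro C hC
          rcases Multiset.mem_cons.1 hC with rfl | hC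
          · exact hTb.2
          · exact hB C (Multiset.mem_cons_of_mem (Multiset.mem_add.2 (Or.inr hC)))
        have hcards : Multiset.card (seqSubs (A ::ₘ Γ₁)) + Multiset.card (seqSubs (B ::ₘ Γ₂))
            + 1 = Multiset.card (seqSubs (Formula.tens n A B ::ₘ (Γ₁ + Γ₂))) := by
          rw [seqSubs_tens_split, Multiset.card_cons, Multiset.card_add]
        have hc₁ : Multiset.card (seqSubs (A ::ₘ Γ₁)) ≤ N := by omega
        have hc₂ : Multiset.card (seqSubs (B ::ₘ Γ₂)) ≤ N := by
          have hpos : 0 < Multiset.card (seqSubs (A ::ₘ Γ₁)) := by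
            refine Multiset.card_pos_iff_exists_mem.2 ⟨A, ?_⟩
            rw [seqSubs_cons]
            exact Multiset.mem_add.2 (Or.inl (by simpa using A.self_mem_subs))
          omega
        obtain ⟨π₁⟩ := ih _ hc₁ hB₁ hb₁
        obtain ⟨π₂⟩ := ih _ hc₂ hB₂ hb₂
        exact ⟨Proof.tens n π₁ π₂⟩
      · have hone : ∀ A ∈ Γ, ∃ m, A = Formula.one m := by
          intro A hA
          cases A with
          | one m => exact ⟨m, rfl⟩
          | bot a => exact absurd ⟨a, hA⟩ hbot
          | parr m C D => exact absurd (hB _ hA) id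
          | tens m C D => exact absurd ⟨m, C, D, hA⟩ htens
        obtain ⟨m, rfl⟩ := balance_ones hone hb
        exact ⟨Proof.one m⟩

end MLL
namespace MLL

lemma WellNamed.of_subs_le {Γ Δ : Sequent} (h : seqSubs Γ ≤ seqSubs Δ)
    (hW : WellNamed Δ) : WellNamed Γ :=
  Multiset.nodup_of_le (Multiset.map_le_map h) hW

lemma exists_span : ∀ (N : ℕ) (Γ : Sequent), Multiset.card (seqSubs Γ) ≤ N →
    WellNamed Γ → IsBasic Γ → balance Γ = 0 → ∃ lk p f rt, Span Γ lk p f rt := by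
  intro N
  induction N with
  | zero =>
    intro Γ hcard hW hB hb
    by_cases hΓ : Γ = 0
    · subst hΓ
      rw [balance] at hb
      simp at hb
    · obtain ⟨A, hA⟩ := Multiset.exists_mem_of_ne_zero hΓ
      exfalso
      have : A ∈ seqSubs Γ := Multiset.mem_bind.2 ⟨A, hA, by simpa using A.self_mem_subs⟩
      have := Multiset.card_pos_iff_exists_mem.2 ⟨A, this⟩
      omega
  | succ N ih =>
    intro Γ hcard hW hB hb
    by_cases hbot : ∃ a, Formula.bot a ∈ Γ
    · obtain ⟨a, ha⟩ := hbot
      obtain ⟨Γ', rfl⟩ := Multiset.exists_cons_of_mem ha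
      have hb' : balance Γ' = 0 := by rwa [balance_cons_bot] at hb
      have hcard' : Multiset.card (seqSubs Γ') ≤ N := by
        rw [seqSubs_cons] at hcard
        simp [Formula.subs] at hcard
        omega
      have hW' : WellNamed Γ' := WellNamed.of_le (Multiset.le_cons_self _ _) hW
      obtain ⟨lk', p', f', rt', sp⟩ :=
        ih Γ' hcard' hW' (fun C hC => hB C (Multiset.mem_cons_of_mem hC)) hb'
      obtain ⟨lk, p, f, sp'⟩ := span_bot hW sp
      exact ⟨lk, p, f, rt', sp'⟩
    · by_cases htens : ∃ n A B, Formula.tens n A B ∈ Γ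
      · obtain ⟨n, A, B, hT⟩ := htens
        obtain ⟨Δ, rfl⟩ := Multiset.exists_cons_of_mem hT
        obtain ⟨Γ₁, Γ₂, rfl, hb₁, hb₂⟩ := tens_split hB hb
        have hTb : IsBasicFormula (Formula.tens n A B) := hB _ (Multiset.mem_cons_self _ _)
        have hB₁ : IsBasic (A ::ₘ Γ₁) := by
          intro C hC
          rcases Multiset.mem_cons.1 hC with rfl | hC
          · exact hTb.1
          · exact hB C (Multiset.mem_cons_of_mem (Multiset.mem_add.2 (Or.inl hC)))
        have hB₂ : IsBasic (B ::ₘ Γ₂) := by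
          intro C hC
          rcases Multiset.mem_cons.1 hC with rfl | hC
          · exact hTb.2
          · exact hB C (Multiset.mem_cons_of_mem (Multiset.mem_add.2 (Or.inr hC)))
        have hsplit := seqSubs_tens_split n A B Γ₁ Γ₂
        have hcards : Multiset.card (seqSubs (A ::ₘ Γ₁)) + Multiset.card (seqSubs (B ::ₘ Γ₂))
            + 1 = Multiset.card (seqSubs (Formula.tens n A B ::ₘ (Γ₁ + Γ₂))) := by
          rw [hsplit, Multiset.card_cons, Multiset.card_add]
        have hpos₁ : 0 < Multiset.card (seqSubs (A ::ₘ Γ₁)) := by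
          refine Multiset.card_pos_iff_exists_mem.2 ⟨A, ?_⟩
          rw [seqSubs_cons]
          exact Multiset.mem_add.2 (Or.inl (by simpa using A.self_mem_subs))
        have hpos₂ : 0 < Multiset.card (seqSubs (B ::ₘ Γ₂)) := by
          refine Multiset.card_pos_iff_exists_mem.2 ⟨B, ?_⟩
          rw [seqSubs_cons]
          exact Multiset.mem_add.2 (Or.inl (by simpa using B.self_mem_subs))
        have hc₁ : Multiset.card (seqSubs (A ::ₘ Γ₁)) ≤ N := by omega
        have hc₂ : Multiset.card (seqSubs (B ::ₘ Γ₂)) ≤ N := by omega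
        have hW₁ : WellNamed (A ::ₘ Γ₁) := by
          refine WellNamed.of_subs_le ?_ hW
          rw [hsplit]
          exact le_trans (Multiset.le_add_right _ _) (Multiset.le_cons_self _ _)
        have hW₂ : WellNamed (B ::ₘ Γ₂) := by
          refine WellNamed.of_subs_le ?_ hW
          rw [hsplit]
          exact le_trans (Multiset.le_add_left _ _) (Multiset.le_cons_self _ _)
        obtain ⟨lk₁, p₁', f₁', rt₁, sp₁'⟩ := ih _ hc₁ hW₁ hB₁ hb₁
        obtain ⟨lk₂, p₂', f₂', rt₂, sp₂'⟩ := ih _ hc₂ hW₂ hB₂ hb₂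
        obtain ⟨p₁, f₁, sp₁⟩ := sp₁'.reroot (seqNames_self_mem _ (Multiset.mem_cons_self A Γ₁))
        obtain ⟨p₂, f₂, sp₂⟩ := sp₂'.reroot (seqNames_self_mem _ (Multiset.mem_cons_self B Γ₂))
        obtain ⟨lk, p, f, sp⟩ := span_tens hW sp₁ sp₂
        exact ⟨lk, p, f, n, sp⟩
      · have hone : ∀ A ∈ Γ, ∃ m, A = Formula.one m := by
          intro A hA
          cases A with
          | one m => exact ⟨m, rfl⟩
          | bot a => exact absurd ⟨a, hA⟩ hbot
          | parr m C D => exact absurd (hB _ hA) id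
          | tens m C D => exact absurd ⟨m, C, D, hA⟩ htens
        obtain ⟨m, rfl⟩ := balance_ones hone hb
        exact span_one m

end MLL
open MLL in
/-- A balanced basic sequent is inhabited: it admits a cut-free,
identity-free unit-only MLL proof, and equivalently a correct linking. -/
theorem mll_balanced_basic_inhabited {Γ : Sequent} (hW : WellNamed Γ)
    (hB : IsBasic Γ) (h : balance Γ = 0) :
    Nonempty (Proof Γ) ∧ ∃ lk : Linking, Correct Γ lk := by
  constructor
  · exact exists_proof (Multiset.card (seqSubs Γ)) Γ le_rfl hB h
  · obtain ⟨lk, p, f, rt, sp⟩ := exists_span (Multiset.card (seqSubs Γ)) Γ le_rfl hW hB h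
    refine ⟨lk, sp.valid, fun σ => ?_⟩
    exact tree_of_parent (seqNames Γ) rt sp.rt_mem p f sp.parent (switchGraph Γ lk σ)
      (fun x y hx hy => sp.adj σ x y hx hy)
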